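/- Let (g, ω) be a 2-nilpotent symplectic Lie algebra that carries a bi-invariant nondegenerate symmetric bilinear form B (i.e., B([u,v],w) = -B(v,[u,w])). Then [ad_u, ad*_v] = 0 for all u,v in g, where ad*_v is the adjoint of ad_v with respect to ω; hence (g, ω) is a symplectic Poisson algebra. -/

import Mathlib

/-- A product `α` on a Lie algebra is Lie-admissible if `α(u,v) - α(v,u) = ⁅u,v⁆`. -/
def LieAdmissible {K L : Type*} [Field K] [LieRing L] [LieAlgebra K L]
    (α : L →ₗ[K] L →ₗ[K] L) : Prop :=
  ∀ u v : L, α u v - α v u = ⁅u, v⁆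

/-- A product `α` on a Lie algebra is bi-invariant if every `ad_u` is a derivation of it. -/
def BiInvariant {K L : Type*} [Field K] [LieRing L] [LieAlgebra K L]
    (α : L →ₗ[K] L →ₗ[K] L) : Prop :=
  ∀ u v w : L, ⁅u, α v w⁆ = α ⁅u, v⁆ w + α v ⁅u, w⁆

/-- A quasi-canonical product: Lie-admissible, bi-invariant, with curvature
`K^α(u,v) = [L_u, L_v] - L_{[u,v]}` equal to `-(1/4) ad_{[u,v]}`. -/
def QuasiCanonical {K L : Type*} [Field K] [LieRing L] [LieAlgebra K L]
    (α : L →ₗ[K] L →ₗ[K] L) : Prop :=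
  LieAdmissible α ∧ BiInvariant α ∧
    ∀ u v w : L, α u (α v w) - α v (α u w) - α ⁅u, v⁆ w = -((4 : K)⁻¹ • ⁅⁅u, v⁆, w⁆)

/-- a 2-nilpotent symplectic Lie algebra carrying a bi-invariant
nondegenerate symmetric bilinear form satisfies `[ad_u, ad*_v] = 0`, i.e. it is a
symplectic Poisson algebra. -/
theorem stmt18 {K L : Type*} [Field K] [CharZero K] [LieRing L] [LieAlgebra K L]
    [FiniteDimensional K L]
    (ω : L →ₗ[K] L →ₗ[K] K)
    (hskew : ∀ u v : L, ω u v = -ω v u)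
    (hωnd : ∀ u : L, (∀ v : L, ω u v = 0) → u = 0)
    (hcocycle : ∀ u v w : L, ω ⁅u, v⁆ w + ω ⁅v, w⁆ u + ω ⁅w, u⁆ v = 0)
    (h2nil : ∀ u v w : L, ⁅⁅u, v⁆, w⁆ = 0)
    (B : L →ₗ[K] L →ₗ[K] K)
    (hBsymm : ∀ u v : L, B u v = B v u)
    (hBnd : ∀ u : L, (∀ v : L, B u v = 0) → u = 0)
    (hBinv : ∀ u v w : L, B ⁅u, v⁆ w = -B v ⁅u, w⁆)
    (adStar : L → L →ₗ[K] L)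
    (hadj : ∀ u v w : L, ω (adStar u v) w = ω v ⁅u, w⁆) :
    ∀ u v w : L, ⁅u, adStar v w⁆ = adStar v ⁅u, w⁆ := by
  have hnil' : ∀ x y z : L, ⁅x, ⁅y, z⁆⁆ = 0 := by
    intro x y z
    rw [← lie_skew, h2nil, neg_zero]
  have hωDD : ∀ x y a b : L, ω ⁅x, y⁆ ⁅a, b⁆ = 0 := by
    intro x y a b
    have := hcocycle x y ⁅a, b⁆
    rw [hnil' y a b, h2nil a b x] at this
    simpa using this
  set D : Submodule K L := Submodule.span K {z : L | ∃ x y : L, ⁅x, y⁆ = z} with hD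
  have hωrefl : LinearMap.BilinForm.IsRefl ω := by
    intro x y h
    rw [hskew, h, neg_zero]
  have hBrefl : LinearMap.BilinForm.IsRefl B := by
    intro x y h
    rw [hBsymm, h]
  have hωN : LinearMap.BilinForm.Nondegenerate ω :=
    ⟨fun x hx => hωnd x hx, fun y hy => hωnd y (fun v => by rw [hskew, hy, neg_zero])⟩
  have hBN : LinearMap.BilinForm.Nondegenerate B :=
    ⟨fun x hx => hBnd x hx, fun y hy => hBnd y (fun v => by rw [hBsymm, hy])⟩
  set Zω := LinearMap.BilinForm.orthogonal ω D with hZω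
  set ZB := LinearMap.BilinForm.orthogonal B D with hZB
  -- elements of ZB are central
  have hZBc : ∀ z ∈ ZB, ∀ u : L, ⁅u, z⁆ = 0 := by
    intro z hz u
    apply hBnd
    intro x
    rw [hBinv]
    have : B ⁅u, x⁆ z = 0 := hz ⁅u, x⁆ (Submodule.subset_span ⟨u, x, rfl⟩)
    rw [hBsymm] at this
    rw [this, neg_zero]
  -- anything ω-orthogonal to every single bracket lies in Zω
  have hspan : ∀ z : L, (∀ x y : L, ω ⁅x, y⁆ z = 0) → z ∈ Zω := by
    intro z hz n hn
    induction hn using Submodule.span_induction with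
    | mem n h =>
      obtain ⟨x, y, rfl⟩ := h
      exact hz x y
    | zero => show ω 0 z = 0; simp
    | add a b _ _ ha hb =>
      show ω (a + b) z = 0
      have ha' : ω a z = 0 := ha
      have hb' : ω b z = 0 := hb
      simp [ha', hb']
    | smul c a _ ha =>
      show ω (c • a) z = 0
      have ha' : ω a z = 0 := ha
      simp [ha']
  -- central elements belong to Zω
  have hcZω : ∀ z : L, (∀ u : L, ⁅u, z⁆ = 0) → z ∈ Zω := by
    intro z hc
    apply hspan
    intro x y
    have := hcocycle x y z
    have h1 : ⁅y, z⁆ = 0 := hc y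
    have h2 : ⁅z, x⁆ = 0 := by rw [← lie_skew, hc x, neg_zero]
    rw [h1, h2] at this
    simpa using this
  have hle : ZB ≤ Zω := fun z hz => hcZω z (hZBc z hz)
  have hrB := LinearMap.BilinForm.finrank_orthogonal hBN D
  have hrω := LinearMap.BilinForm.finrank_orthogonal hωN D
  have heq : ZB = Zω :=
    Submodule.eq_of_le_of_finrank_le hle (by rw [hrB]; exact hrω.le)
  intro u v w
  have hmem : adStar v w ∈ Zω := by
    apply hspan
    intro x y
    have h0 : ω (adStar v w) ⁅x, y⁆ = 0 := by
      rw [hadj, hnil' v x y, map_zero]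
    rw [hskew, h0, neg_zero]
  have h1 : ⁅u, adStar v w⁆ = 0 := hZBc _ (heq ▸ hmem) u
  have h2 : adStar v ⁅u, w⁆ = 0 := by
    apply hωnd
    intro x
    rw [hadj]
    exact hωDD u w v x
  rw [h1, h2]
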